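/- Let L ≥ 2 and a_2, …, a_L be arbitrary complex numbers. Then there exist coefficients p_2, …, p_L such that the polynomial P_L(t) = ∑_{l=2}^{L} p_l t^l satisfies: the polynomial Q_L(t) := P_L(t) + ∑_{k=2}^{L} a_k (P_L(t) + t)^k has zero coefficients at t^j for all j = 0, 1, …, L (i.e., Q_L(t) is divisible by t^{L+1}). -/

import Mathlib

open Polynomial Finset

/-- If `A` and `B` are divisible by `X` and agree mod `X^(m+1)`, then `A^k` and `B^k`
(with `k ≥ 2`) agree mod `X^(m+2)`. -/
lemma eikonal_aux_pow_sub (A B : Polynomial ℂ) (m k : ℕ) (hk : 2 ≤ k)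
    (hA : (X : Polynomial ℂ) ∣ A) (hB : (X : Polynomial ℂ) ∣ B)
    (hAB : (X : Polynomial ℂ) ^ (m + 1) ∣ A - B) :
    (X : Polynomial ℂ) ^ (m + 2) ∣ A ^ k - B ^ k := by
  have h := geom_sum₂_mul A B k
  rw [← h]
  have hX : (X : Polynomial ℂ) ∣ ∑ i ∈ range k, A ^ i * B ^ (k - 1 - i) := by
    apply Finset.dvd_sum
    intro i hi
    rcases Nat.eq_zero_or_pos i with h0 | h0
    · subst h0
      simp only [pow_zero, one_mul, Nat.sub_zero]
      exact dvd_pow hB (by omega)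
    · exact Dvd.dvd.mul_right (dvd_pow hA (by omega)) _
  have : (X : Polynomial ℂ) ^ (m + 2) = X * X ^ (m + 1) := by ring
  rw [this]
  exact mul_dvd_mul hX hAB

/-- Solution of the approximate eikonal equation (Lemma on polynomial
coefficients): for any `L ≥ 2` and numbers `a_2, …, a_L` there are coefficients
`p_2, …, p_L` such that, with `P_L(t) = ∑_{l=2}^{L} p_l t^l`, the polynomial
`Q_L(t) = P_L(t) + ∑_{k=2}^{L} a_k (P_L(t) + t)^k` is divisible by `t^{L+1}`. -/
theorem eikonal_polynomial_exists (L : ℕ) (hL : 2 ≤ L) (a : ℕ → ℂ) :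
    ∃ p : ℕ → ℂ, ∃ P : Polynomial ℂ,
      P = ∑ l ∈ Finset.Icc 2 L, C (p l) * X ^ l ∧
      (X : Polynomial ℂ) ^ (L + 1) ∣
        (P + ∑ k ∈ Finset.Icc 2 L, C (a k) * (P + X) ^ k) := by
  set Pof : (ℕ → ℂ) → Polynomial ℂ := fun p => ∑ l ∈ Finset.Icc 2 L, C (p l) * X ^ l with hPof
  set Qof : (ℕ → ℂ) → Polynomial ℂ :=
    fun p => Pof p + ∑ k ∈ Finset.Icc 2 L, C (a k) * (Pof p + X) ^ k with hQof
  have hXP : ∀ p, (X : Polynomial ℂ) ∣ Pof p := by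
    intro p
    apply Finset.dvd_sum
    intro l hl
    simp only [Finset.mem_Icc] at hl
    exact Dvd.dvd.mul_left (dvd_pow_self X (by omega)) _
  have key : ∀ m, 1 ≤ m → m ≤ L → ∃ p, ∀ j ≤ m, (Qof p).coeff j = 0 := by
    intro m hm
    induction m, hm using Nat.le_induction with
    | base =>
      intro _
      refine ⟨fun _ => 0, ?_⟩
      intro j hj
      have hQ0 : Qof (fun _ => 0) = ∑ k ∈ Finset.Icc 2 L, C (a k) * X ^ k := by
        simp [hQof, hPof]
      rw [hQ0, finset_sum_coeff]
      apply Finset.sum_eq_zero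
      intro k hk
      simp only [Finset.mem_Icc] at hk
      rw [coeff_C_mul, coeff_X_pow, if_neg (by omega)]
      ring
    | succ m hm ih =>
      intro hm1L
      obtain ⟨p, hp⟩ := ih (by omega)
      set δ : ℂ := -(Qof p).coeff (m + 1) with hδ
      set p' : ℕ → ℂ := Function.update p (m + 1) (p (m + 1) + δ) with hp'
      set D : Polynomial ℂ := C δ * X ^ (m + 1) with hD
      have hP' : Pof p' = Pof p + D := by
        have hterm : ∀ l, C (p' l) * X ^ l
            = C (p l) * X ^ l + (if l = m + 1 then D else 0) := by
          intro l
          by_cases h : l = m + 1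
          · subst h
            simp [hp', Function.update_apply, hD, C_add, add_mul]
          · simp [hp', Function.update_apply, h]
        simp only [hPof]
        rw [Finset.sum_congr rfl (fun l _ => hterm l), Finset.sum_add_distrib,
          Finset.sum_ite_eq' (Finset.Icc 2 L) (m + 1) (fun _ => D),
          if_pos (by simp only [Finset.mem_Icc]; omega)]
      set R : Polynomial ℂ :=
        ∑ k ∈ Finset.Icc 2 L, C (a k) * ((Pof p' + X) ^ k - (Pof p + X) ^ k) with hR
      have hRdvd : (X : Polynomial ℂ) ^ (m + 2) ∣ R := by
        apply Finset.dvd_sum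
        intro k hk
        simp only [Finset.mem_Icc] at hk
        refine Dvd.dvd.mul_left ?_ _
        apply eikonal_aux_pow_sub _ _ _ _ hk.1
        · exact dvd_add (hXP p') dvd_rfl
        · exact dvd_add (hXP p) dvd_rfl
        · have : Pof p' + X - (Pof p + X) = D := by rw [hP']; ring
          rw [this, hD]
          exact ⟨C δ, mul_comm _ _⟩
      have hQ' : Qof p' = Qof p + D + R := by
        simp only [hQof, hR, hP']
        have hsum : ∑ k ∈ Finset.Icc 2 L, C (a k) * (Pof p + D + X) ^ k
            = ∑ k ∈ Finset.Icc 2 L, (C (a k) * (Pof p + X) ^ k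
              + C (a k) * ((Pof p + D + X) ^ k - (Pof p + X) ^ k)) :=
          Finset.sum_congr rfl (fun k _ => by ring)
        rw [hsum, Finset.sum_add_distrib]
        ring
      have hcoeff : ∀ j ≤ m + 1,
          (Qof p').coeff j = (Qof p).coeff j + D.coeff j := by
        intro j hj
        rw [hQ', coeff_add, coeff_add]
        have : R.coeff j = 0 := by
          rw [Polynomial.X_pow_dvd_iff] at hRdvd
          exact hRdvd j (by omega)
        rw [this, add_zero]
      refine ⟨p', ?_⟩
      intro j hj
      rcases Nat.lt_or_ge j (m + 1) with h | h
      · rw [hcoeff j hj, hp j (by omega), hD, coeff_C_mul, coeff_X_pow,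
          if_neg (by omega)]
        ring
      · have hj' : j = m + 1 := by omega
        subst hj'
        rw [hcoeff _ le_rfl, hD, coeff_C_mul, coeff_X_pow, if_pos rfl, hδ]
        ring
  obtain ⟨p, hp⟩ := key L (by omega) le_rfl
  refine ⟨p, Pof p, rfl, ?_⟩
  rw [Polynomial.X_pow_dvd_iff]
  intro d hd
  exact hp d (by omega)
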